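/- arXiv:1210.3795 — 5 statements merged into one kernel-verified Lean document; each statement's English description precedes it below -/
import Mathlib

section
/- For every integer d ≥ 2 there exists α(d) > 0 such that for all α > α(d) and every u ∈ ℝ^d with u_i > 0 for all i and ∑_{i=1}^d u_i = 1, the inequality 2 min_{1≤i≤d} u_i − d (min_{1≤i≤d} u_i)² ≥ (∑_{i=1}^d u_i^{−α})/(∑_{i=1}^d u_i^{−(1+α)}) holds, and equality holds if and only if u_i = 1/d for all i. -/
open Finset

/-- Tangent-line form of Bernoulli's inequality for rpow:
`y^(β-1) * (y + β*(x-y)) ≤ x^β` for positive `x, y` and `β ≥ 1`. -/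
private lemma bern_tangent {x y β : ℝ} (hx : 0 < x) (hy : 0 < y) (hβ : 1 ≤ β) :
    y ^ (β - 1) * (y + β * (x - y)) ≤ x ^ β := by
  have hs : (-1 : ℝ) ≤ (x - y) / y := by
    rw [le_div_iff₀ hy]; linarith only [hx, hy]
  have h := one_add_mul_self_le_rpow_one_add hs hβ
  have h1 : (1 : ℝ) + (x - y) / y = x / y := by field_simp; ring
  rw [h1, Real.div_rpow hx.le hy.le] at h
  have hyβ : (0:ℝ) < y ^ β := Real.rpow_pos_of_pos hy β
  have h2 : (1 + β * ((x - y) / y)) * y ^ β ≤ x ^ β := (le_div_iff₀ hyβ).mp h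
  have hyb : y ^ (β - 1) * y = y ^ β := by
    rw [Real.rpow_sub hy, Real.rpow_one, div_mul_cancel₀ _ hy.ne']
  calc y ^ (β - 1) * (y + β * (x - y))
      = (1 + β * ((x - y) / y)) * (y ^ (β - 1) * y) := by field_simp
    _ = (1 + β * ((x - y) / y)) * y ^ β := by rw [hyb]
    _ ≤ x ^ β := h2

set_option maxHeartbeats 1200000 in
/-- Core inequality: if all `v i ≥ 1`, `v i0 = 1` and `∑ v > d`, then
`∑ (v i)^(-β) * (v i - (1 + δ)) < 0` where `δ = (∑v - d)/(∑v)`, provided `β ≥ 4d`. -/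
private lemma core_lemma (d : ℕ) (hd : 2 ≤ d) {β : ℝ} (hβ : 4 * (d:ℝ) ≤ β)
    (v : Fin d → ℝ) (hv1 : ∀ i, 1 ≤ v i) (i0 : Fin d) (hv0 : v i0 = 1)
    (hT : (d : ℝ) < ∑ i, v i) :
    ∑ i, (v i) ^ (-β) * (v i - (1 + ((∑ i, v i) - (d:ℝ)) / (∑ i, v i))) < 0 := by
  have hd2 : (2:ℝ) ≤ (d:ℝ) := by exact_mod_cast hd
  set T : ℝ := ∑ i, v i with hTdef
  clear_value T
  have hT0 : 0 < T := by linarith only [hT, hd2]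
  set W : ℝ := T - (d:ℝ) with hWdef
  clear_value W
  have hW0 : 0 < W := by rw [hWdef]; linarith only [hT]
  set δ : ℝ := W / T with hδdef
  clear_value δ
  have hδ0 : 0 < δ := by rw [hδdef]; exact div_pos hW0 hT0
  have hδ1 : δ < 1 := by rw [hδdef, div_lt_one hT0, hWdef]; linarith only [hd2]
  set D : ℝ := 1 + δ with hDdef
  clear_value D
  have hn1 : (0:ℝ) < (d:ℝ) - 1 := by linarith only [hd2]
  set s : ℝ := W / ((d:ℝ) - 1) with hsdef
  clear_value s
  have hs0 : 0 < s := by rw [hsdef]; exact div_pos hW0 hn1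
  set y : ℝ := 1 + s with hydef
  clear_value y
  have hy0 : (0:ℝ) < y := by rw [hydef]; linarith only [hs0]
  have hy1 : (1:ℝ) < y := by rw [hydef]; linarith only [hs0]
  have hβpos : (0:ℝ) < β := by linarith only [hβ, hd2]
  have hβ8 : (8:ℝ) ≤ β := by linarith only [hβ, hd2]
  have hβ1 : (1:ℝ) ≤ β := by linarith only [hβ8]
  have hβn : (d:ℝ) - 1 < β := by linarith only [hβ, hd2]
  have hDy : D ≤ y := by
    rw [hDdef, hydef]
    have : δ ≤ s := by
      rw [hδdef, hsdef, div_le_div_iff₀ hT0 hn1]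
      exact mul_le_mul_of_nonneg_left (by linarith only [hT, hd2]) hW0.le
    linarith only [this]
  have hD1 : (1:ℝ) < D := by rw [hDdef]; linarith only [hδ0]
  have hD0 : (0:ℝ) < D := by linarith only [hD1]
  have hmem : i0 ∈ (univ : Finset (Fin d)) := mem_univ i0
  have hcard : (((univ : Finset (Fin d)).erase i0).card : ℝ) = (d:ℝ) - 1 := by
    rw [card_erase_of_mem hmem, card_univ, Fintype.card_fin]
    have : 1 ≤ d := by omega
    push_cast [Nat.cast_sub this]
    ring
  have hsum_erase : ∑ i ∈ univ.erase i0, v i = T - 1 := by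
    have h := Finset.add_sum_erase univ v hmem
    rw [hv0] at h
    rw [hTdef]
    linarith only [h]
  -- split the sum
  rw [← Finset.add_sum_erase _ _ hmem, hv0, Real.one_rpow, one_mul]
  -- goal : 1 - D + ∑ i in erase, ... < 0
  have hgoal : ∀ Se : ℝ, Se < δ → 1 - D + Se < 0 := by
    intro Se h; rw [hDdef]; linarith only [h]
  apply hgoal
  -- now bound the erased sum by δ
  set κ : ℝ := β * D - (β - 1) * y with hκdef
  clear_value κ
  have hvpos : ∀ i, (0:ℝ) < v i := fun i => lt_of_lt_of_le one_pos (hv1 i)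
  rcases le_or_gt 0 κ with hκ0 | hκ0
  · -- Case 1 : κ ≥ 0, tangent line at y
    have hyβ1 : (0:ℝ) < y ^ (β + 1) := Real.rpow_pos_of_pos hy0 _
    have PW1 : ∀ i ∈ univ.erase i0,
        (v i) ^ (-β) * (v i - D) ≤ ((y - D) * y + κ * (v i - y)) / y ^ (β + 1) := by
      intro i _
      set x : ℝ := v i with hxdef
      clear_value x
      have hx0 : (0:ℝ) < x := by rw [hxdef]; exact hvpos i
      have hxβ : (0:ℝ) < x ^ β := Real.rpow_pos_of_pos hx0 β
      have hrw : x ^ (-β) * (x - D) = (x - D) / x ^ β := by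
        rw [Real.rpow_neg hx0.le]; ring
      rw [hrw, div_le_div_iff₀ hxβ hyβ1]
      set A : ℝ := (y - D) * y + κ * (x - y) with hAdef
      clear_value A
      rcases le_or_gt 0 A with hA0 | hA0
      · -- A ≥ 0
        have hb := bern_tangent hx0 hy0 hβ1
        have hid : A * (y + β * (x - y)) = (x - D) * (y * y) + β * κ * (x - y) ^ 2 := by
          rw [hAdef, hκdef]; ring
        have hyy : y ^ (β + 1) = y ^ (β - 1) * y * y := by
          rw [show β + 1 = β - 1 + 1 + 1 by ring, Real.rpow_add hy0, Real.rpow_add hy0,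
            Real.rpow_one]
        have hybm : (0:ℝ) < y ^ (β - 1) := Real.rpow_pos_of_pos hy0 _
        have hnn : (0:ℝ) ≤ β * κ * (x - y) ^ 2 :=
          mul_nonneg (mul_nonneg hβpos.le hκ0) (sq_nonneg _)
        calc (x - D) * y ^ (β + 1)
            = y ^ (β - 1) * ((x - D) * (y * y)) := by rw [hyy]; ring
          _ ≤ y ^ (β - 1) * ((x - D) * (y * y) + β * κ * (x - y) ^ 2) :=
              mul_le_mul_of_nonneg_left (le_add_of_nonneg_right hnn) hybm.le
          _ = A * (y ^ (β - 1) * (y + β * (x - y))) := by rw [← hid]; ring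
          _ ≤ A * x ^ β := mul_le_mul_of_nonneg_left hb hA0
      · -- A < 0
        have hκpos : 0 < κ := by
          rcases lt_or_eq_of_le hκ0 with h | h
          · exact h
          · exfalso
            rw [hAdef, ← h] at hA0
            have h2 : 0 ≤ (y - D) * y := mul_nonneg (by linarith only [hDy]) hy0.le
            linarith only [h2, hA0]
        have hxD : x < D := by
          have hidx : κ * (x - D) = A - β * (y - D) ^ 2 := by rw [hAdef, hκdef]; ring
          have h2 : 0 ≤ β * (y - D) ^ 2 := mul_nonneg hβpos.le (sq_nonneg _)
          by_contra hcon
          push_neg at hcon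
          have h3 : 0 ≤ κ * (x - D) := mul_nonneg hκpos.le (by linarith only [hcon])
          linarith only [hidx, h2, h3, hA0]
        have hxy : x < y := lt_of_lt_of_le hxD hDy
        have hκy : κ ≤ y := by
          have h1 : β * D ≤ β * y := mul_le_mul_of_nonneg_left hDy hβpos.le
          rw [hκdef]; linarith only [h1]
        have hnegA : -A ≤ (D - x) * y := by
          have h1 : κ * (y - x) ≤ y * (y - x) := mul_le_mul_of_nonneg_right hκy (by linarith only [hxy])
          rw [hAdef]; linarith only [h1]
        have hxyβ : x ^ β ≤ y ^ β := Real.rpow_le_rpow hx0.le hxy.le hβpos.le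
        have hyy2 : y ^ (β + 1) = y ^ β * y := by rw [Real.rpow_add hy0, Real.rpow_one]
        have c1 : (-A) * x ^ β ≤ ((D - x) * y) * x ^ β :=
          mul_le_mul_of_nonneg_right hnegA hxβ.le
        have c2 : ((D - x) * y) * x ^ β ≤ ((D - x) * y) * y ^ β :=
          mul_le_mul_of_nonneg_left hxyβ (mul_nonneg (by linarith only [hxD]) hy0.le)
        rw [hyy2]; linarith only [c1.trans c2]
    have hsum1 : ∑ i ∈ univ.erase i0, (v i) ^ (-β) * (v i - D)
        ≤ ∑ i ∈ univ.erase i0, ((y - D) * y + κ * (v i - y)) / y ^ (β + 1) :=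
      Finset.sum_le_sum PW1
    have hTy : ((d:ℝ) - 1) * y = T - 1 := by
      rw [hydef, hsdef]; field_simp; rw [hWdef]; ring
    have hsum2 : ∑ i ∈ univ.erase i0, ((y - D) * y + κ * (v i - y)) / y ^ (β + 1)
        = ((d:ℝ) - 1) * ((y - D) * y) / y ^ (β + 1) := by
      rw [← Finset.sum_div]
      congr 1
      rw [Finset.sum_add_distrib, Finset.sum_const, ← Finset.mul_sum, Finset.sum_sub_distrib,
        Finset.sum_const, hsum_erase, nsmul_eq_mul, nsmul_eq_mul, hcard, hTy]
      ring
    have hidA : ((d:ℝ) - 1) * (y - D) = δ * (1 + W) := by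
      rw [hydef, hsdef, hDdef, hδdef]
      field_simp
      rw [hWdef]; ring
    have hBern : 1 + β * s ≤ y ^ β := by
      have h := one_add_mul_self_le_rpow_one_add (by linarith only [hs0] : (-1:ℝ) ≤ s) hβ1
      rw [hydef]; exact h
    have hWβ : 1 + W < 1 + β * s := by
      have h2 : β * s * ((d:ℝ) - 1) = β * W := by rw [hsdef]; field_simp
      have h1 : W * ((d:ℝ) - 1) < β * W := by
        have h3 := mul_lt_mul_of_pos_right hβn hW0
        linarith only [h3]
      have h4 : W * ((d:ℝ) - 1) < β * s * ((d:ℝ) - 1) := by linarith only [h1, h2]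
      have h5 : W < β * s := lt_of_mul_lt_mul_right h4 hn1.le
      linarith only [h5]
    have hyβ : (0:ℝ) < y ^ β := Real.rpow_pos_of_pos hy0 β
    have hyy2 : y ^ (β + 1) = y ^ β * y := by rw [Real.rpow_add hy0, Real.rpow_one]
    have hfin : ((d:ℝ) - 1) * ((y - D) * y) / y ^ (β + 1) < δ := by
      have hnum : ((d:ℝ) - 1) * ((y - D) * y) = δ * (1 + W) * y := by
        rw [show ((d:ℝ) - 1) * ((y - D) * y) = (((d:ℝ) - 1) * (y - D)) * y by ring, hidA]
      rw [hnum, hyy2, mul_div_mul_right _ _ hy0.ne']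
      rw [div_lt_iff₀ hyβ]
      have h4 : 1 + W < y ^ β := by linarith only [hBern, hWβ]
      exact mul_lt_mul_of_pos_left h4 hδ0
    calc ∑ i ∈ univ.erase i0, (v i) ^ (-β) * (v i - D)
        ≤ ((d:ℝ) - 1) * ((y - D) * y) / y ^ (β + 1) := by rw [← hsum2]; exact hsum1
      _ < δ := hfin
  · -- Case 2 : κ < 0, bound by the max of H
    have hβm1 : (0:ℝ) < β - 1 := by linarith only [hβ8]
    have hβ1' : (1:ℝ) < β - 1 := by linarith only [hβ8]
    set z : ℝ := β * D / (β - 1) with hzdef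
    clear_value z
    have hzid : (β - 1) * z = β * D := by
      rw [hzdef]; field_simp
    have hz1 : 1 < z := by
      rw [hzdef, lt_div_iff₀ hβm1]
      have h1 := mul_lt_mul_of_pos_left hD1 hβpos
      linarith only [h1, hβpos]
    have hz0 : (0:ℝ) < z := by linarith only [hz1]
    have hzβ : (0:ℝ) < z ^ (β - 1) := Real.rpow_pos_of_pos hz0 _
    have hden : (0:ℝ) < β * z ^ (β - 1) := mul_pos hβpos hzβ
    have PW2 : ∀ i ∈ univ.erase i0,
        (v i) ^ (-β) * (v i - D) ≤ 1 / (β * z ^ (β - 1)) := by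
      intro i _
      set x : ℝ := v i with hxdef
      clear_value x
      have hx0 : (0:ℝ) < x := by rw [hxdef]; exact hvpos i
      have hxβ : (0:ℝ) < x ^ β := Real.rpow_pos_of_pos hx0 β
      have hb := bern_tangent hx0 hz0 hβ1
      have h2 : z + β * (x - z) = β * (x - D) := by linear_combination (-1 : ℝ) * hzid
      rw [h2] at hb
      have hrw : x ^ (-β) * (x - D) = (x - D) / x ^ β := by
        rw [Real.rpow_neg hx0.le]; ring
      rw [hrw, div_le_div_iff₀ hxβ hden]
      calc (x - D) * (β * z ^ (β - 1)) = z ^ (β - 1) * (β * (x - D)) := by ring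
        _ ≤ x ^ β := hb
        _ = 1 * x ^ β := by ring
    have hsum1 : ∑ i ∈ univ.erase i0, (v i) ^ (-β) * (v i - D)
        ≤ ((d:ℝ) - 1) * (1 / (β * z ^ (β - 1))) := by
      calc ∑ i ∈ univ.erase i0, (v i) ^ (-β) * (v i - D)
          ≤ ∑ _i ∈ univ.erase i0, 1 / (β * z ^ (β - 1)) := Finset.sum_le_sum PW2
        _ = ((d:ℝ) - 1) * (1 / (β * z ^ (β - 1))) := by
            rw [Finset.sum_const, nsmul_eq_mul, hcard]
    set ρ : ℝ := β * δ with hρdef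
    clear_value ρ
    have hρ0 : 0 < ρ := by rw [hρdef]; exact mul_pos hβpos hδ0
    have hβD : β * D = β + ρ := by rw [hDdef, hρdef]; ring
    -- κ < 0 gives (d-1)*(1+ρ) < (β-1)*W
    have hκW : ((d:ℝ) - 1) * (1 + ρ) < (β - 1) * W := by
      have h1 : β * D < (β - 1) * y := by rw [hκdef] at hκ0; linarith only [hκ0]
      rw [hβD, hydef] at h1
      -- β + ρ < (β-1)*(1+s)  ⟹  1 + ρ < (β-1)*s
      have h2 : 1 + ρ < (β - 1) * s := by linarith only [h1]
      have h3 : ((d:ℝ) - 1) * (1 + ρ) < ((d:ℝ) - 1) * ((β - 1) * s) :=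
        mul_lt_mul_of_pos_left h2 hn1
      have h4 : ((d:ℝ) - 1) * ((β - 1) * s) = (β - 1) * W := by
        rw [hsdef]; field_simp
      linarith only [h3, h4]
    have hρT : ρ * T = β * W := by
      rw [hρdef, hδdef]; field_simp
    have hTnW : T = (d:ℝ) + W := by rw [hWdef]; ring
    have hdρ : (d:ℝ) * ρ = W * (β - ρ) := by linear_combination hρT - ρ * hTnW
    have hβρ : ρ < β := by
      rw [hρdef]
      have h1 := mul_lt_mul_of_pos_left hδ1 hβpos
      linarith only [h1]
    have hρd : (d:ℝ) - 1 ≤ ρ * (2 + ρ) := by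
      by_contra hcon
      push_neg at hcon
      rw [show ρ * (2 + ρ) = ρ ^ 2 + 2 * ρ from by ring] at hcon
      have h2 : ρ ^ 2 + 2 * ρ < (d:ℝ) - 1 := hcon
      have h2ρ : 2 * ρ < (d:ℝ) - 1 := by linarith only [sq_nonneg ρ, h2]
      have e1 : ((d:ℝ) - 1) * (ρ ^ 2) ≤ ((d:ℝ) - 1) * ((d:ℝ) - 1 - 2 * ρ) :=
        mul_le_mul_of_nonneg_left (by linarith only [h2]) (by linarith only [hd2])
      have e2 : ((d:ℝ) - 1) * ((d:ℝ) - 1 - 2 * ρ) ≤ β * ((d:ℝ) - 1 - 2 * ρ) :=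
        mul_le_mul_of_nonneg_right (by linarith only [hβ, hd2]) (by linarith only [h2ρ])
      have hβρ0 : 0 ≤ β * ρ := mul_nonneg hβpos.le hρ0.le
      have hX : (d:ℝ) * (β - 1) * ρ ≤ ((d:ℝ) - 1) * (1 + ρ) * (β - ρ) := by linarith only [e1, e2, hβρ0, hρ0]
      have hc : (β - 1) * W * (β - ρ) ≤ ((d:ℝ) - 1) * (1 + ρ) * (β - ρ) := by
        have : (d:ℝ) * (β - 1) * ρ = (β - 1) * W * (β - ρ) := by
          linear_combination (β - 1) * hdρ
        linarith only [this, hX]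
      have hc2 : (β - 1) * W ≤ ((d:ℝ) - 1) * (1 + ρ) :=
        le_of_mul_le_mul_right hc (by linarith only [hβρ] : 0 < β - ρ)
      linarith only [hκW, hc2]
    have hzpow : 2 + ρ < z ^ (β - 1) := by
      have h := one_add_mul_self_lt_rpow_one_add
        (by linarith only [hz1] : (-1:ℝ) ≤ z - 1) (by intro hcc; linarith only [hz1, hcc.le] : z - 1 ≠ 0) hβ1'
      have h1 : 1 + (β - 1) * (z - 1) = 2 + ρ := by linear_combination hzid + hβD
      have h2 : (1 + (z - 1) : ℝ) = z := by ring
      rw [h2, h1] at h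
      exact h
    have hfin : ((d:ℝ) - 1) * (1 / (β * z ^ (β - 1))) < δ := by
      rw [mul_one_div, div_lt_iff₀ hden]
      have h1 : ρ * (2 + ρ) < ρ * z ^ (β - 1) := mul_lt_mul_of_pos_left hzpow hρ0
      have h2 : δ * (β * z ^ (β - 1)) = ρ * z ^ (β - 1) := by rw [hρdef]; ring
      rw [h2]
      linarith only [h1, hρd]
    linarith only [hsum1, hfin]

set_option maxHeartbeats 1200000 in
/-- Lemma 2: for every `d ≥ 2` there is `α(d) > 0` such that for `α > α(d)`
and `u` in the open simplex,
`2 min u − d (min u)² ≥ (∑ u_i^{−α})/(∑ u_i^{−(1+α)})`, with equality iff `u = U`. -/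
theorem stmt_13 (d : ℕ) (hd : 2 ≤ d) :
    ∃ A : ℝ, 0 < A ∧ ∀ α : ℝ, A < α →
      ∀ u : Fin d → ℝ, (∀ i, 0 < u i) → ∑ i, u i = 1 →
        ((∑ i, u i ^ (-α)) / (∑ i, u i ^ (-(1 + α))) ≤
            2 * (⨅ i, u i) - d * (⨅ i, u i) ^ 2 ∧
          (2 * (⨅ i, u i) - d * (⨅ i, u i) ^ 2 =
              (∑ i, u i ^ (-α)) / (∑ i, u i ^ (-(1 + α))) ↔
            u = fun _ => 1 / (d : ℝ))) := by
  have hd0 : (0:ℝ) < (d:ℝ) := by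
    have : 0 < d := by omega
    exact_mod_cast this
  refine ⟨4 * d, by linarith only [hd0], ?_⟩
  intro α hα u hu hsum
  haveI : Nonempty (Fin d) := ⟨⟨0, by omega⟩⟩
  set β : ℝ := 1 + α with hβdef
  clear_value β
  set m : ℝ := ⨅ i, u i with hmdef
  obtain ⟨i0, -, hi0⟩ := Finset.exists_min_image univ u ⟨⟨0, by omega⟩, mem_univ _⟩
  have hm_le : ∀ i, m ≤ u i := fun i => ciInf_le (Set.finite_range u).bddBelow i
  have hm_eq : m = u i0 :=
    le_antisymm (hm_le i0) (le_ciInf fun i => hi0 i (mem_univ i))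
  have hm_pos : 0 < m := hm_eq ▸ hu i0
  have hpow : ∀ i, u i ^ (-α) = u i * u i ^ (-β) := by
    intro i
    rw [show -α = 1 + -β by rw [hβdef]; ring, Real.rpow_add (hu i), Real.rpow_one]
  have hDpos : 0 < ∑ i, u i ^ (-β) :=
    Finset.sum_pos (fun i _ => Real.rpow_pos_of_pos (hu i) _) ⟨i0, mem_univ i0⟩
  have hdm : (d:ℝ) * m ≤ 1 := by
    have h1 : ∑ _i : Fin d, m ≤ ∑ i, u i := Finset.sum_le_sum fun i _ => hm_le i
    rw [hsum, Finset.sum_const, card_univ, Fintype.card_fin, nsmul_eq_mul] at h1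
    exact h1
  rcases eq_or_lt_of_le hdm with hdm1 | hdm'
  · -- uniform case : d*m = 1
    have hui : ∀ i, u i = m := by
      have hzero : ∑ i, (u i - m) = 0 := by
        rw [Finset.sum_sub_distrib, hsum, Finset.sum_const, card_univ, Fintype.card_fin,
          nsmul_eq_mul]
        linarith only [hdm1]
      intro i
      have h := (Finset.sum_eq_zero_iff_of_nonneg
        (fun j _ => sub_nonneg.2 (hm_le j))).1 hzero i (mem_univ i)
      linarith only [h]
    have hm1d : m = 1 / (d:ℝ) := by
      rw [eq_div_iff hd0.ne']; linarith only [hdm1]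
    have hNDm : ∑ i, u i ^ (-α) = m * ∑ i, u i ^ (-β) := by
      rw [Finset.mul_sum]
      refine Finset.sum_congr rfl fun i _ => ?_
      rw [hpow i, hui i]
    have hratio : (∑ i, u i ^ (-α)) / (∑ i, u i ^ (-β)) = m := by
      rw [hNDm, mul_div_assoc, div_self hDpos.ne', mul_one]
    have hcm : 2 * m - (d:ℝ) * m ^ 2 = m := by linear_combination (-m) * hdm1
    rw [hratio, hcm]
    refine ⟨le_refl m, ?_⟩
    constructor
    · intro _
      funext i
      rw [hui i, hm1d]
    · intro _
      rfl
  · -- strict case : d*m < 1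
    have hβ4d : 4 * (d:ℝ) ≤ β := by rw [hβdef]; linarith only [hα]
    have hv1 : ∀ i, 1 ≤ u i / m := fun i => (one_le_div hm_pos).2 (hm_le i)
    have hv0 : u i0 / m = 1 := by rw [← hm_eq, div_self hm_pos.ne']
    have hsv : ∑ i, u i / m = 1 / m := by rw [← Finset.sum_div, hsum]
    have hTgt : (d:ℝ) < ∑ i, u i / m := by
      rw [hsv, lt_div_iff₀ hm_pos]
      linarith only [hdm']
    have hcore := core_lemma d hd hβ4d (fun i => u i / m) hv1 i0 hv0 hTgt
    rw [hsv] at hcore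
    have hsimp : (1 + (1 / m - (d:ℝ)) / (1 / m)) = 2 - (d:ℝ) * m := by
      field_simp
      ring
    rw [hsimp] at hcore
    have hdiv : ∀ i, (u i / m) ^ (-β) = u i ^ (-β) * m ^ β := by
      intro i
      rw [Real.div_rpow (hu i).le hm_pos.le, Real.rpow_neg hm_pos.le, div_eq_mul_inv, inv_inv]
    have hconv : ∑ i, (u i / m) ^ (-β) * (u i / m - (2 - (d:ℝ) * m))
        = (m ^ β / m) * ∑ i, u i ^ (-β) * (u i - (2 * m - (d:ℝ) * m ^ 2)) := by
      rw [Finset.mul_sum]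
      refine Finset.sum_congr rfl fun i _ => ?_
      rw [hdiv i]
      field_simp
    rw [hconv] at hcore
    have hmpow : 0 < m ^ β / m := div_pos (Real.rpow_pos_of_pos hm_pos β) hm_pos
    have KEY : ∑ i, u i ^ (-β) * (u i - (2 * m - (d:ℝ) * m ^ 2)) < 0 := by
      by_contra h
      push_neg at h
      have h2 := mul_nonneg hmpow.le h
      linarith only [h2, hcore]
    have hND : (∑ i, u i ^ (-α)) - (2 * m - (d:ℝ) * m ^ 2) * (∑ i, u i ^ (-β))
        = ∑ i, u i ^ (-β) * (u i - (2 * m - (d:ℝ) * m ^ 2)) := by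
      rw [Finset.mul_sum, ← Finset.sum_sub_distrib]
      refine Finset.sum_congr rfl fun i _ => ?_
      rw [hpow i]; ring
    have hlt : (∑ i, u i ^ (-α)) / (∑ i, u i ^ (-β)) < 2 * m - (d:ℝ) * m ^ 2 := by
      rw [div_lt_iff₀ hDpos]
      linarith only [KEY, hND]
    refine ⟨hlt.le, ?_⟩
    constructor
    · intro heq
      exfalso
      rw [heq] at hlt
      exact lt_irrefl _ hlt
    · intro hueq
      exfalso
      have h1 : u i0 = 1 / (d:ℝ) := by rw [hueq]
      rw [hm_eq, h1] at hdm'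
      rw [mul_one_div, div_self hd0.ne'] at hdm'
      exact lt_irrefl _ hdm'
end

section
/- Let d ≥ 2 be an integer and let u, v ∈ ℝ^d satisfy u_i > 0, v_i > 0 for all i and ∑_{i=1}^d u_i = ∑_{i=1}^d v_i = 1. Then ∑_{i=1}^d u_i v_i ≥ min_{1≤i≤d} u_i + min_{1≤j≤d} v_j − d (min_{1≤i≤d} u_i)(min_{1≤j≤d} v_j). -/
open Finset

/-- for `u, v` in the open simplex,
`∑ u_i v_i ≥ min u + min v − d (min u)(min v)`. -/
theorem stmt_14 (d : ℕ) (hd : 2 ≤ d) (u v : Fin d → ℝ)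
    (hu : ∀ i, 0 < u i) (hv : ∀ i, 0 < v i)
    (hus : ∑ i, u i = 1) (hvs : ∑ i, v i = 1) :
    (⨅ i, u i) + (⨅ j, v j) - d * (⨅ i, u i) * (⨅ j, v j) ≤ ∑ i, u i * v i := by
  have : NeZero d := ⟨by omega⟩
  set a := ⨅ i, u i with ha
  set b := ⨅ j, v j with hb
  have hau : ∀ i, a ≤ u i := fun i => ciInf_le (Finite.bddBelow_range u) i
  have hbv : ∀ i, b ≤ v i := fun i => ciInf_le (Finite.bddBelow_range v) i
  have key : ∑ i, (a * v i + u i * b - a * b) ≤ ∑ i, u i * v i := by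
    apply Finset.sum_le_sum
    intro i _
    nlinarith [hau i, hbv i]
  calc a + b - d * a * b
      = ∑ i, (a * v i + u i * b - a * b) := by
        simp [Finset.sum_sub_distrib, Finset.sum_add_distrib, ← Finset.mul_sum,
          ← Finset.sum_mul, hus, hvs, Finset.card_univ]
        ring
    _ ≤ ∑ i, u i * v i := key
end

section
/- Let d ≥ 1 be an integer and u ∈ ℝ^d with u_i > 0 for all i. For 0 < α ≤ β, one has (∑_{i=1}^d u_i^{−β})/(∑_{i=1}^d u_i^{−(1+β)}) ≤ (∑_{i=1}^d u_i^{−α})/(∑_{i=1}^d u_i^{−(1+α)}); moreover the inequality is strict whenever α < β and the u_i are not all equal. That is, the function α ↦ (∑_{i=1}^d u_i^{−α})/(∑_{i=1}^d u_i^{−(1+α)}) is nonincreasing in α > 0, and strictly decreasing if u is not a constant vector. -/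
open Finset

lemma factor_nonneg (a b γ : ℝ) (ha : 0 < a) (hb : 0 < b) (hγ : 0 ≤ γ) :
    0 ≤ (a ^ (-γ) - b ^ (-γ)) * (a⁻¹ - b⁻¹) := by
  rcases le_total a b with h | h
  · have h1 : b ^ (-γ) ≤ a ^ (-γ) :=
      Real.rpow_le_rpow_of_nonpos ha h (neg_nonpos.2 hγ)
    have h2 : b⁻¹ ≤ a⁻¹ := by
      apply inv_anti₀ ha h
    exact mul_nonneg (sub_nonneg.2 h1) (sub_nonneg.2 h2)
  · have h1 : a ^ (-γ) ≤ b ^ (-γ) :=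
      Real.rpow_le_rpow_of_nonpos hb h (neg_nonpos.2 hγ)
    have h2 : a⁻¹ ≤ b⁻¹ := by
      apply inv_anti₀ hb h
    nlinarith [h1, h2]

lemma factor_pos (a b γ : ℝ) (ha : 0 < a) (hb : 0 < b) (hγ : 0 < γ) (hab : a ≠ b) :
    0 < (a ^ (-γ) - b ^ (-γ)) * (a⁻¹ - b⁻¹) := by
  rcases lt_or_gt_of_ne hab with h | h
  · have h1 : b ^ (-γ) < a ^ (-γ) :=
      Real.rpow_lt_rpow_of_neg ha h (neg_neg_iff_pos.2 hγ)
    have h2 : b⁻¹ < a⁻¹ := by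
      exact inv_strictAnti₀ ha h
    exact mul_pos (sub_pos.2 h1) (sub_pos.2 h2)
  · have h1 : a ^ (-γ) < b ^ (-γ) :=
      Real.rpow_lt_rpow_of_neg hb h (neg_neg_iff_pos.2 hγ)
    have h2 : a⁻¹ < b⁻¹ := by
      exact inv_strictAnti₀ hb h
    exact mul_pos_of_neg_of_neg (sub_neg.2 h1) (sub_neg.2 h2)

lemma pair_id (a b α γ : ℝ) (ha : 0 < a) (hb : 0 < b) :
    (a ^ (-α) * b ^ (-(1 + (α + γ))) - a ^ (-(α + γ)) * b ^ (-(1 + α)))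
      + (b ^ (-α) * a ^ (-(1 + (α + γ))) - b ^ (-(α + γ)) * a ^ (-(1 + α)))
    = (a ^ (-α) * b ^ (-α)) * ((a ^ (-γ) - b ^ (-γ)) * (a⁻¹ - b⁻¹)) := by
  have e1 : -(1 + (α + γ)) = -α + -γ + -1 := by ring
  have e2 : -(α + γ) = -α + -γ := by ring
  have e3 : -(1 + α) = -α + -1 := by ring
  rw [e1, e2, e3]
  simp only [Real.rpow_add ha, Real.rpow_add hb, Real.rpow_neg_one]
  ring

/-- for `u ∈ (0,∞)^d`, the function
`α ↦ (∑ u_i^{−α})/(∑ u_i^{−(1+α)})` is nonincreasing in `α > 0`,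
and strictly decreasing if the `u_i` are not all equal. -/
theorem stmt_15 (d : ℕ) (hd : 1 ≤ d) (u : Fin d → ℝ) (hu : ∀ i, 0 < u i)
    (α β : ℝ) (hα : 0 < α) (hαβ : α ≤ β) :
    (∑ i, u i ^ (-β)) / (∑ i, u i ^ (-(1 + β))) ≤
      (∑ i, u i ^ (-α)) / (∑ i, u i ^ (-(1 + α))) ∧
    (α < β → (∃ i j, u i ≠ u j) →
      (∑ i, u i ^ (-β)) / (∑ i, u i ^ (-(1 + β))) <
        (∑ i, u i ^ (-α)) / (∑ i, u i ^ (-(1 + α)))) := by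
  haveI : NeZero d := ⟨by omega⟩
  obtain ⟨γ, hγ0, rfl⟩ : ∃ γ, 0 ≤ γ ∧ β = α + γ := ⟨β - α, by linarith, by ring⟩
  have hne : (Finset.univ : Finset (Fin d)).Nonempty := univ_nonempty
  have hden1 : 0 < ∑ i, u i ^ (-(1 + (α + γ))) :=
    Finset.sum_pos (fun i _ => Real.rpow_pos_of_pos (hu i) _) hne
  have hden2 : 0 < ∑ i, u i ^ (-(1 + α)) :=
    Finset.sum_pos (fun i _ => Real.rpow_pos_of_pos (hu i) _) hne
  set F : Fin d → Fin d → ℝ := fun i j =>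
    u i ^ (-α) * u j ^ (-(1 + (α + γ))) - u i ^ (-(α + γ)) * u j ^ (-(1 + α)) with hF
  have hsum : ∀ i j, F i j + F j i
      = (u i ^ (-α) * u j ^ (-α))
        * ((u i ^ (-γ) - u j ^ (-γ)) * ((u i)⁻¹ - (u j)⁻¹)) :=
    fun i j => pair_id (u i) (u j) α γ (hu i) (hu j)
  have hdouble : (∑ i, ∑ j, (F i j + F j i)) = 2 * ∑ i, ∑ j, F i j := by
    have hc : ∑ i : Fin d, ∑ j : Fin d, F j i = ∑ i, ∑ j, F i j := Finset.sum_comm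
    simp only [Finset.sum_add_distrib, hc]
    ring
  have key : (∑ i, u i ^ (-(α + γ))) * (∑ j, u j ^ (-(1 + α))) ≤
      (∑ i, u i ^ (-α)) * (∑ j, u j ^ (-(1 + (α + γ)))) := by
    have h1 : 0 ≤ ∑ i, ∑ j, (F i j + F j i) := by
      apply Finset.sum_nonneg; intro i _
      apply Finset.sum_nonneg; intro j _
      rw [hsum]
      exact mul_nonneg (mul_nonneg (Real.rpow_pos_of_pos (hu i) _).le
        (Real.rpow_pos_of_pos (hu j) _).le) (factor_nonneg _ _ _ (hu i) (hu j) hγ0)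
    have h2 : 0 ≤ ∑ i, ∑ j, F i j := by linarith [hdouble]
    have h3 : ∑ i, ∑ j, F i j
        = (∑ i, u i ^ (-α)) * (∑ j, u j ^ (-(1 + (α + γ))))
          - (∑ i, u i ^ (-(α + γ))) * (∑ j, u j ^ (-(1 + α))) := by
      rw [Finset.sum_mul_sum, Finset.sum_mul_sum, ← Finset.sum_sub_distrib]
      refine Finset.sum_congr rfl fun i _ => ?_
      rw [← Finset.sum_sub_distrib]
    linarith [h3 ▸ h2]
  constructor
  · rw [div_le_div_iff₀ hden1 hden2]
    linarith [key]
  · intro hlt ⟨i0, j0, hij⟩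
    have hγpos : 0 < γ := by linarith
    have keylt : (∑ i, u i ^ (-(α + γ))) * (∑ j, u j ^ (-(1 + α))) <
        (∑ i, u i ^ (-α)) * (∑ j, u j ^ (-(1 + (α + γ)))) := by
      have h1 : 0 < ∑ i, ∑ j, (F i j + F j i) := by
        apply Finset.sum_pos' (fun i _ => Finset.sum_nonneg fun j _ => by
          rw [hsum]
          exact mul_nonneg (mul_nonneg (Real.rpow_pos_of_pos (hu i) _).le
            (Real.rpow_pos_of_pos (hu j) _).le) (factor_nonneg _ _ _ (hu i) (hu j) hγ0))
        refine ⟨i0, Finset.mem_univ _, ?_⟩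
        apply Finset.sum_pos' (fun j _ => by
          rw [hsum]
          exact mul_nonneg (mul_nonneg (Real.rpow_pos_of_pos (hu i0) _).le
            (Real.rpow_pos_of_pos (hu j) _).le) (factor_nonneg _ _ _ (hu i0) (hu j) hγ0))
        refine ⟨j0, Finset.mem_univ _, ?_⟩
        rw [hsum]
        exact mul_pos (mul_pos (Real.rpow_pos_of_pos (hu i0) _)
          (Real.rpow_pos_of_pos (hu j0) _)) (factor_pos _ _ _ (hu i0) (hu j0) hγpos hij)
      have h2 : 0 < ∑ i, ∑ j, F i j := by linarith [hdouble]
      have h3 : ∑ i, ∑ j, F i j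
          = (∑ i, u i ^ (-α)) * (∑ j, u j ^ (-(1 + (α + γ))))
            - (∑ i, u i ^ (-(α + γ))) * (∑ j, u j ^ (-(1 + α))) := by
        rw [Finset.sum_mul_sum, Finset.sum_mul_sum, ← Finset.sum_sub_distrib]
        refine Finset.sum_congr rfl fun i _ => ?_
        rw [← Finset.sum_sub_distrib]
      linarith [h3 ▸ h2]
    rw [div_lt_div_iff₀ hden1 hden2]
    linarith [keylt]
end

section
/- Let d ≥ 2 be an integer, α > 0, and w ∈ ℝ^d with w_i > 0 for all i. Then (∑_{i=1}^d w_i^{−α})/(∑_{i=1}^d w_i^{−(1+α)}) < d^{1/(α+1)} · min_{1≤i≤d} w_i. -/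
open Finset

/-- for `d ≥ 2`, `α > 0` and `w ∈ (0,∞)^d`,
`(∑ w_i^{−α})/(∑ w_i^{−(1+α)}) < d^{1/(α+1)} · min_i w_i`. -/
theorem stmt_16 (d : ℕ) (hd : 2 ≤ d) (α : ℝ) (hα : 0 < α)
    (w : Fin d → ℝ) (hw : ∀ i, 0 < w i) :
    (∑ i, w i ^ (-α)) / (∑ i, w i ^ (-(1 + α))) <
      (d : ℝ) ^ ((1 : ℝ) / (α + 1)) * ⨅ i, w i := by
  have hne : Nonempty (Fin d) := ⟨⟨0, by omega⟩⟩
  obtain ⟨i0, hi0⟩ := exists_eq_ciInf_of_finite (f := w)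
  set m := ⨅ i, w i with hm
  have hm0 : 0 < m := hi0 ▸ hw i0
  set S := ∑ i, w i ^ (-(1+α)) with hS
  set T := ∑ i, w i ^ (-α) with hT
  have hS0 : 0 < S :=
    Finset.sum_pos (fun i _ => Real.rpow_pos_of_pos (hw i) _) univ_nonempty
  have hα1 : (0:ℝ) < α + 1 := by linarith
  -- strict lower bound on S
  obtain ⟨i1, hi1⟩ : ∃ i1 : Fin d, i1 ≠ i0 := by
    have : 1 < Fintype.card (Fin d) := by simp; omega
    exact Fintype.exists_ne_of_one_lt_card this i0
  have hSgt : m ^ (-(1+α)) < S := by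
    have h1 : m ^ (-(1+α)) = ∑ i ∈ {i0}, w i ^ (-(1+α)) := by
      simp [hi0.symm]
    rw [h1, hS]
    refine Finset.sum_lt_sum_of_subset (subset_univ _) (mem_univ i1) (by simp [hi1])
      (Real.rpow_pos_of_pos (hw i1) _)
      (fun j _ _ => le_of_lt (Real.rpow_pos_of_pos (hw j) _))
  -- Hölder
  have hpq : Real.HolderConjugate ((α+1)/α) (α+1) := by
    rw [Real.holderConjugate_iff]; constructor
    · rw [lt_div_iff₀ hα]; linarith
    · field_simp
  have hold := Real.inner_le_Lp_mul_Lq_of_nonneg (s := univ)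
    (f := fun i => w i ^ (-α)) (g := fun _ => (1:ℝ)) hpq
    (fun i _ => (Real.rpow_pos_of_pos (hw i) _).le) (fun i _ => zero_le_one)
  have key : T ≤ S ^ (α/(α+1)) * (d:ℝ) ^ ((1:ℝ)/(α+1)) := by
    have e1 : ∀ i : Fin d, (w i ^ (-α)) ^ ((α+1)/α) = w i ^ (-(1+α)) := by
      intro i
      rw [← Real.rpow_mul (hw i).le]
      congr 1
      field_simp
      ring
    have e2 : (1:ℝ)/((α+1)/α) = α/(α+1) := by field_simp
    have e3 : ∑ _i : Fin d, ((1:ℝ)) ^ (α+1) = (d:ℝ) := by simp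
    calc T = ∑ i, w i ^ (-α) * 1 := by simp [hT]
    _ ≤ (∑ i, (w i ^ (-α)) ^ ((α+1)/α)) ^ ((1:ℝ)/((α+1)/α)) *
        (∑ _i : Fin d, ((1:ℝ)) ^ (α+1)) ^ ((1:ℝ)/(α+1)) := hold
    _ = S ^ (α/(α+1)) * (d:ℝ) ^ ((1:ℝ)/(α+1)) := by
        rw [e2, e3]
        congr 2
        exact Finset.sum_congr rfl fun i _ => e1 i
  -- divide by S
  have step1 : T / S ≤ (d:ℝ) ^ ((1:ℝ)/(α+1)) * S ^ (-(1:ℝ)/(α+1)) := by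
    rw [div_le_iff₀ hS0]
    calc T ≤ S ^ (α/(α+1)) * (d:ℝ) ^ ((1:ℝ)/(α+1)) := key
    _ = (d:ℝ) ^ ((1:ℝ)/(α+1)) * S ^ (-(1:ℝ)/(α+1)) * S := by
        rw [mul_assoc, ← Real.rpow_add_one hS0.ne']
        rw [mul_comm]
        congr 1
        field_simp
        congr 1; ring
  have step2 : S ^ (-(1:ℝ)/(α+1)) < m := by
    have h1 : S ^ (-(1:ℝ)/(α+1)) < (m ^ (-(1+α))) ^ (-(1:ℝ)/(α+1)) := by
      apply Real.rpow_lt_rpow_of_neg (Real.rpow_pos_of_pos hm0 _) hSgt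
      rw [div_neg_iff]
      right
      constructor <;> linarith
    have h2 : (m ^ (-(1+α))) ^ (-(1:ℝ)/(α+1)) = m := by
      rw [← Real.rpow_mul hm0.le]
      rw [show (-(1+α)) * (-(1:ℝ)/(α+1)) = 1 by field_simp; ring]
      exact Real.rpow_one m
    rwa [h2] at h1
  calc T / S ≤ (d:ℝ) ^ ((1:ℝ)/(α+1)) * S ^ (-(1:ℝ)/(α+1)) := step1
  _ < (d:ℝ) ^ ((1:ℝ)/(α+1)) * m := by
      apply mul_lt_mul_of_pos_left step2
      apply Real.rpow_pos_of_pos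
      have : (0:ℕ) < d := by omega
      exact_mod_cast this
end

section
/- Let d ≥ 2 be an integer and α > d − 2. Let M be the symmetric d×d real matrix with entries M_{ij} = (α+1)·1_{i=j} − (α+2)/d + 1_{i=d} + 1_{j=d} − d·1_{i=d}·1_{j=d}. Then M is positive semidefinite (i.e. xᵀ M x ≥ 0 for all x ∈ ℝ^d) and M annihilates the all-ones vector: M·(1,…,1)ᵀ = 0. -/
open Finset Matrix

/-- the Hessian-type matrix
`M_{ij} = (α+1)·1_{i=j} − (α+2)/d + 1_{i=d} + 1_{j=d} − d·1_{i=d}·1_{j=d}`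
is positive semidefinite and annihilates the all-ones vector, for `d ≥ 2`, `α > d − 2`. -/
theorem stmt_17 (d : ℕ) (hd : 2 ≤ d) (α : ℝ) (hα : (d : ℝ) - 2 < α)
    (M : Matrix (Fin d) (Fin d) ℝ)
    (hM : ∀ i j, M i j =
      (α + 1) * (if i = j then 1 else 0) - (α + 2) / d +
        (if i.val = d - 1 then 1 else 0) + (if j.val = d - 1 then 1 else 0) -
        d * (if i.val = d - 1 then 1 else 0) * (if j.val = d - 1 then 1 else 0)) :
    (∀ x : Fin d → ℝ, 0 ≤ ∑ i, ∑ j, x i * M i j * x j) ∧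
      M.mulVec (fun _ => 1) = 0 := by
  have hd0 : (0:ℝ) < (d:ℝ) := by positivity
  set L : Fin d := ⟨d - 1, by omega⟩ with hL
  have hiff : ∀ i : Fin d, (i.val = d - 1) ↔ i = L := by
    intro i; constructor
    · intro h; exact Fin.ext h
    · intro h; rw [h]
  have hMeq : ∀ i j, M i j =
      (α + 1) * (if i = j then 1 else 0) - (α + 2) / d +
        (if i = L then 1 else 0) + (if j = L then 1 else 0) -
        d * (if i = L then 1 else 0) * (if j = L then 1 else 0) := by
    intro i j; rw [hM]; simp only [hiff]
  constructor
  · intro x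
    set s : ℝ := ∑ i, x i with hs
    have hQ : ∑ i, ∑ j, x i * M i j * x j =
        (α + 1) * ∑ i, (x i)^2 - (α + 2) / d * s^2 + 2 * x L * s - d * (x L)^2 := by
      have expand : ∀ i j : Fin d, x i * M i j * x j =
          (α + 1) * ((if i = j then (1:ℝ) else 0) * (x i * x j))
          - (α + 2) / d * (x i * x j)
          + (if i = L then (1:ℝ) else 0) * (x i * x j)
          + (if j = L then (1:ℝ) else 0) * (x i * x j)
          - d * ((if i = L then (1:ℝ) else 0) * ((if j = L then (1:ℝ) else 0) * (x i * x j))) := by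
        intro i j; rw [hMeq]; ring
      simp only [expand, Finset.sum_add_distrib, Finset.sum_sub_distrib, ← Finset.mul_sum]
      have h1 : ∑ i, ∑ j, (if i = j then (1:ℝ) else 0) * (x i * x j) = ∑ i, (x i)^2 := by
        refine Finset.sum_congr rfl fun i _ => ?_
        simp [ite_mul, Finset.sum_ite_eq, sq]
      have h2 : ∑ i, ∑ j, x i * x j = s^2 := by
        rw [← Finset.sum_mul_sum]; rw [sq]
      have h3 : ∀ i : Fin d, ∑ j, (if j = L then (1:ℝ) else 0) * (x i * x j) = x i * x L := by
        intro i; simp [ite_mul, Finset.sum_ite_eq']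
      have h4 : ∑ i, (if i = L then (1:ℝ) else 0) * (∑ j, x i * x j) = x L * s := by
        simp only [← Finset.mul_sum]
        simp [ite_mul, Finset.sum_ite_eq']
        exact Or.inl hs.symm
      have h5 : ∑ i, (if i = L then (1:ℝ) else 0) *
          (∑ j, (if j = L then (1:ℝ) else 0) * (x i * x j)) = x L * x L := by
        simp only [h3]
        simp [ite_mul, Finset.sum_ite_eq']
      have h6 : ∑ i, ∑ j, (if j = L then (1:ℝ) else 0) * (x i * x j) = s * x L := by
        simp only [h3, ← Finset.sum_mul]
        rw [← hs]
      rw [h1, h6, h5, ← hs]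
      have h4' : ∑ i, (if i = L then (1:ℝ) else 0) * (x i * s) = x L * s := by
        simp [ite_mul, Finset.sum_ite_eq']
      rw [h4', show (∑ i, x i * s) = s^2 from by rw [← Finset.sum_mul, ← hs, sq]]
      ring
    set y : Fin d → ℝ := fun i => x i - s / d with hy
    have hsumy : ∑ i, y i = 0 := by
      simp only [hy, Finset.sum_sub_distrib, Finset.sum_const, Finset.card_univ,
        Fintype.card_fin, nsmul_eq_mul, ← hs]
      field_simp
      ring
    have hsq : ∑ i, (y i)^2 = ∑ i, (x i)^2 - s^2 / d := by
      have : ∀ i, (y i)^2 = (x i)^2 - 2 * (s/d) * x i + (s/d)^2 := by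
        intro i; simp only [hy]; ring
      simp only [this, Finset.sum_add_distrib, Finset.sum_sub_distrib, ← Finset.mul_sum,
        Finset.sum_const, Finset.card_univ, Fintype.card_fin, nsmul_eq_mul, ← hs]
      field_simp
      ring
    have hQ2 : ∑ i, ∑ j, x i * M i j * x j = (α + 1) * ∑ i, (y i)^2 - d * (y L)^2 := by
      rw [hQ, hsq]
      simp only [hy]
      field_simp
      ring
    rw [hQ2]
    -- Cauchy-Schwarz step
    have hyL : y L = -∑ i ∈ Finset.univ.erase L, y i := by
      have := Finset.sum_erase_add Finset.univ y (Finset.mem_univ L)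
      linarith [this.symm ▸ hsumy]
    have hcs : (y L)^2 ≤ ((d:ℝ) - 1) * ∑ i ∈ Finset.univ.erase L, (y i)^2 := by
      rw [hyL, neg_sq]
      have := sq_sum_le_card_mul_sum_sq (s := Finset.univ.erase L) (f := y)
      have hcard : (#(Finset.univ.erase L) : ℝ) = (d:ℝ) - 1 := by
        rw [Finset.card_erase_of_mem (Finset.mem_univ L)]
        simp only [Finset.card_univ, Fintype.card_fin]
        have : 1 ≤ d := by omega
        push_cast [Nat.cast_sub this]
        ring
      calc (∑ i ∈ Finset.univ.erase L, y i)^2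
          ≤ (#(Finset.univ.erase L) : ℝ) * ∑ i ∈ Finset.univ.erase L, (y i)^2 := this
        _ = ((d:ℝ) - 1) * ∑ i ∈ Finset.univ.erase L, (y i)^2 := by rw [hcard]
    have hsplit : ∑ i, (y i)^2 = (y L)^2 + ∑ i ∈ Finset.univ.erase L, (y i)^2 := by
      rw [add_comm]
      exact (Finset.sum_erase_add Finset.univ _ (Finset.mem_univ L)).symm
    have hT : (d:ℝ) * (y L)^2 ≤ ((d:ℝ) - 1) * ∑ i, (y i)^2 := by
      rw [hsplit]; nlinarith [hcs]
    have hTnn : 0 ≤ ∑ i, (y i)^2 := Finset.sum_nonneg fun i _ => sq_nonneg _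
    nlinarith [hT, hTnn]
  · funext i
    simp only [Matrix.mulVec, dotProduct, mul_one, Pi.zero_apply]
    simp only [hMeq, Finset.sum_add_distrib, Finset.sum_sub_distrib, Finset.sum_ite_eq',
      Finset.mem_univ, if_true, Finset.sum_const, Finset.card_univ, Fintype.card_fin,
      nsmul_eq_mul]
    have : ∑ j : Fin d, (d:ℝ) * (if i = L then 1 else 0) * (if j = L then 1 else 0)
        = (d:ℝ) * (if i = L then 1 else 0) := by
      rw [← Finset.mul_sum]
      simp [Finset.sum_ite_eq']
    rw [this]
    by_cases h : i = L <;> simp [h] <;> field_simp <;> ring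
end
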